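/- Let δ > 0 and let F be the CDF of a continuous distribution. Define A(θ) = (∫_θ^∞ u dF) / (δ + ∫_θ^∞ dF) and let ρ be the maximizer of A on [0, ∞). Then A is monotonically nondecreasing on [0, ρ] and monotonically nonincreasing on [ρ, ∞). -/

import Mathlib

open MeasureTheory Set

lemma myInt (μ : Measure ℝ) [IsProbabilityMeasure μ]
    (hint : Integrable (fun u => max u 0) μ) {θ : ℝ} (h0 : 0 ≤ θ) :
    IntegrableOn (fun u : ℝ => u) (Ici θ) μ := by
  refine (hint.integrableOn (s := Ici θ)).congr_fun ?_ measurableSet_Ici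
  intro u hu
  exact max_eq_left (h0.trans hu)

lemma split_int (μ : Measure ℝ) [IsProbabilityMeasure μ]
    (hint : Integrable (fun u => max u 0) μ) {θ₁ θ₂ : ℝ} (h0 : 0 ≤ θ₁) (h12 : θ₁ ≤ θ₂) :
    (∫ u in Ici θ₁, u ∂μ) = (∫ u in Ico θ₁ θ₂, u ∂μ) + ∫ u in Ici θ₂, u ∂μ := by
  rw [← setIntegral_union ((Iio_disjoint_Ici le_rfl).mono_left Ico_subset_Iio_self) measurableSet_Ici
    ((myInt μ hint h0).mono_set Ico_subset_Ici_self)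
    (myInt μ hint (h0.trans h12)), Ico_union_Ici_eq_Ici h12]

lemma split_meas (μ : Measure ℝ) [IsProbabilityMeasure μ] {θ₁ θ₂ : ℝ} (h12 : θ₁ ≤ θ₂) :
    (μ (Ici θ₁)).toReal = (μ (Ico θ₁ θ₂)).toReal + (μ (Ici θ₂)).toReal := by
  rw [← ENNReal.toReal_add (measure_ne_top μ _) (measure_ne_top μ _),
    ← measure_union ((Iio_disjoint_Ici le_rfl).mono_left Ico_subset_Iio_self) measurableSet_Ici, Ico_union_Ici_eq_Ici h12]

lemma I_bounds (μ : Measure ℝ) [IsProbabilityMeasure μ]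
    (hint : Integrable (fun u => max u 0) μ) {θ₁ θ₂ : ℝ} (h0 : 0 ≤ θ₁) (h12 : θ₁ ≤ θ₂) :
    θ₁ * (μ (Ico θ₁ θ₂)).toReal ≤ (∫ u in Ico θ₁ θ₂, u ∂μ) ∧
      (∫ u in Ico θ₁ θ₂, u ∂μ) ≤ θ₂ * (μ (Ico θ₁ θ₂)).toReal := by
  have hI : IntegrableOn (fun u : ℝ => u) (Ico θ₁ θ₂) μ :=
    (myInt μ hint h0).mono_set Ico_subset_Ici_self
  have hc : IntegrableOn (fun _ : ℝ => θ₁) (Ico θ₁ θ₂) μ := integrableOn_const (measure_ne_top μ _)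
  have hc2 : IntegrableOn (fun _ : ℝ => θ₂) (Ico θ₁ θ₂) μ := integrableOn_const (measure_ne_top μ _)
  constructor
  · calc θ₁ * (μ (Ico θ₁ θ₂)).toReal = ∫ _ in Ico θ₁ θ₂, θ₁ ∂μ := by
          rw [setIntegral_const, smul_eq_mul, measureReal_def]; ring
      _ ≤ ∫ u in Ico θ₁ θ₂, u ∂μ :=
          setIntegral_mono_on hc hI measurableSet_Ico (fun x hx => hx.1)
  · calc (∫ u in Ico θ₁ θ₂, u ∂μ) ≤ ∫ _ in Ico θ₁ θ₂, θ₂ ∂μ :=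
          setIntegral_mono_on hI hc2 measurableSet_Ico (fun x hx => hx.2.le)
      _ = θ₂ * (μ (Ico θ₁ θ₂)).toReal := by rw [setIntegral_const, smul_eq_mul, measureReal_def]; ring

/-- Key lemma (a): if θ₂ ≤ A θ₂ then A θ₁ ≤ A θ₂ for 0 ≤ θ₁ ≤ θ₂. -/
lemma key_a (δ : ℝ) (hδ : 0 < δ) (μ : Measure ℝ) [IsProbabilityMeasure μ]
    (hint : Integrable (fun u => max u 0) μ) {θ₁ θ₂ : ℝ} (h0 : 0 ≤ θ₁) (h12 : θ₁ ≤ θ₂)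
    (ha : θ₂ * (δ + (μ (Ici θ₂)).toReal) ≤ ∫ u in Ici θ₂, u ∂μ) :
    (∫ u in Ici θ₁, u ∂μ) / (δ + (μ (Ici θ₁)).toReal)
      ≤ (∫ u in Ici θ₂, u ∂μ) / (δ + (μ (Ici θ₂)).toReal) := by
  have hD1 : 0 < δ + (μ (Ici θ₁)).toReal := by positivity
  have hD2 : 0 < δ + (μ (Ici θ₂)).toReal := by positivity
  have hm : 0 ≤ (μ (Ico θ₁ θ₂)).toReal := ENNReal.toReal_nonneg
  obtain ⟨hI1, hI2⟩ := I_bounds μ hint h0 h12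
  rw [div_le_div_iff₀ hD1 hD2, split_int μ hint h0 h12, split_meas μ h12]
  nlinarith [mul_le_mul_of_nonneg_right ha hm, mul_le_mul_of_nonneg_left hI2 hD2.le]

/-- Key lemma (b): if A θ₁ ≤ θ₁ then A θ₂ ≤ A θ₁ for 0 ≤ θ₁ ≤ θ₂. -/
lemma key_b (δ : ℝ) (hδ : 0 < δ) (μ : Measure ℝ) [IsProbabilityMeasure μ]
    (hint : Integrable (fun u => max u 0) μ) {θ₁ θ₂ : ℝ} (h0 : 0 ≤ θ₁) (h12 : θ₁ ≤ θ₂)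
    (hb : (∫ u in Ici θ₁, u ∂μ) ≤ θ₁ * (δ + (μ (Ici θ₁)).toReal)) :
    (∫ u in Ici θ₂, u ∂μ) / (δ + (μ (Ici θ₂)).toReal)
      ≤ (∫ u in Ici θ₁, u ∂μ) / (δ + (μ (Ici θ₁)).toReal) := by
  have hD1 : 0 < δ + (μ (Ici θ₁)).toReal := by positivity
  have hD2 : 0 < δ + (μ (Ici θ₂)).toReal := by positivity
  have hm : 0 ≤ (μ (Ico θ₁ θ₂)).toReal := ENNReal.toReal_nonneg
  obtain ⟨hI1, hI2⟩ := I_bounds μ hint h0 h12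
  rw [div_le_div_iff₀ hD2 hD1, split_int μ hint h0 h12, split_meas μ h12]
  rw [split_int μ hint h0 h12, split_meas μ h12] at hb
  have hD2' : 0 < δ + (μ (Ici θ₂)).toReal := hD2
  have hN2 : (∫ u in Ici θ₂, u ∂μ) ≤ θ₁ * (δ + (μ (Ici θ₂)).toReal) := by nlinarith
  nlinarith [mul_le_mul_of_nonneg_right hN2 hm, mul_le_mul_of_nonneg_left hI1 hD2'.le]

/-- With A(θ) = (∫_θ^∞ u dF)/(δ + ∫_θ^∞ dF) and ρ the maximizer of A over
[0, ∞), A is monotonically nondecreasing on [0, ρ] and nonincreasing on [ρ, ∞). -/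
theorem unimodality_of_A
    (δ : ℝ) (hδ : 0 < δ)
    (μ : Measure ℝ) [IsProbabilityMeasure μ] [NullSingletonClass μ]
    (hint : Integrable (fun u => max u 0) μ)
    (A : ℝ → ℝ)
    (hA : ∀ θ, A θ = (∫ u in Ici θ, u ∂μ) / (δ + (μ (Ici θ)).toReal))
    (ρ : ℝ) (hρ0 : 0 ≤ ρ)
    (hmax : ∀ θ, 0 ≤ θ → A θ ≤ A ρ) :
    MonotoneOn A (Icc 0 ρ) ∧ AntitoneOn A (Ici ρ) := by
  constructor
  · intro θ₁ h1 θ₂ h2 h12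
    by_cases hc : θ₂ * (δ + (μ (Ici θ₂)).toReal) ≤ ∫ u in Ici θ₂, u ∂μ
    · rw [hA θ₁, hA θ₂]
      exact key_a δ hδ μ hint h1.1 h12 hc
    · -- A θ₂ ≤ θ₂, so A ρ ≤ A θ₂, and A θ₁ ≤ A ρ
      push_neg at hc
      have hD2 : 0 < δ + (μ (Ici θ₂)).toReal := by positivity
      have hb : (∫ u in Ici θ₂, u ∂μ) ≤ θ₂ * (δ + (μ (Ici θ₂)).toReal) := hc.le
      have h1' : A ρ ≤ A θ₂ := by
        rw [hA ρ, hA θ₂]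
        exact key_b δ hδ μ hint h2.1 h2.2 hb
      exact (hmax θ₁ h1.1).trans h1'
  · intro θ₁ h1 θ₂ h2 h12
    by_cases hc : (∫ u in Ici θ₁, u ∂μ) ≤ θ₁ * (δ + (μ (Ici θ₁)).toReal)
    · rw [hA θ₁, hA θ₂]
      exact key_b δ hδ μ hint (hρ0.trans h1) h12 hc
    · push_neg at hc
      have h1' : A ρ ≤ A θ₁ := by
        rw [hA ρ, hA θ₁]
        exact key_a δ hδ μ hint hρ0 h1 hc.le
      exact (hmax θ₂ (hρ0.trans h2)).trans h1'
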